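/- The preprojective algebra R = Π_{Ã_{n-1}} is a free module over its invariant ring R^{D_n} of rank 2n, with basis {e_0, ..., e_{n−1}, α_0, ..., α_{n−1}}. -/

import Mathlib

open scoped BigOperators

/-- Generators of the path algebra of the double of the extended Dynkin quiver Ã_{n-1}:
vertex idempotents `vtx i`, nonstar arrows `arr i : e_i → e_{i+1}`,
star arrows `star i : e_{i+1} → e_i`. -/
inductive PPGen (n : ℕ) : Type
  | vtx (i : ZMod n)
  | arr (i : ZMod n)
  | star (i : ZMod n)

variable (K : Type) [Field K] (n : ℕ) [NeZero n]

abbrev PPFree := FreeAlgebra K (PPGen n)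

noncomputable def E (i : ZMod n) : PPFree K n := FreeAlgebra.ι K (PPGen.vtx i)
noncomputable def A (i : ZMod n) : PPFree K n := FreeAlgebra.ι K (PPGen.arr i)
noncomputable def S (i : ZMod n) : PPFree K n := FreeAlgebra.ι K (PPGen.star i)

/-- Defining relations of the preprojective algebra Π_{Ã_{n-1}}: the path-algebra
relations for the double quiver, together with the preprojective relation
Ω = Σ_i (α_i α_i* − α_i* α_i) = 0. -/
inductive PPRel : PPFree K n → PPFree K n → Prop
  | vtx_mul (i j : ZMod n) :
      PPRel (E K n i * E K n j) (if i = j then E K n i else 0)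
  | vtx_sum : PPRel (∑ i : ZMod n, E K n i) 1
  | arr_left (i : ZMod n) : PPRel (E K n i * A K n i) (A K n i)
  | arr_right (i : ZMod n) : PPRel (A K n i * E K n (i + 1)) (A K n i)
  | arr_left' (i j : ZMod n) : j ≠ i → PPRel (E K n j * A K n i) 0
  | arr_right' (i j : ZMod n) : j ≠ i + 1 → PPRel (A K n i * E K n j) 0
  | star_left (i : ZMod n) : PPRel (E K n (i + 1) * S K n i) (S K n i)
  | star_right (i : ZMod n) : PPRel (S K n i * E K n i) (S K n i)
  | star_left' (i j : ZMod n) : j ≠ i + 1 → PPRel (E K n j * S K n i) 0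
  | star_right' (i j : ZMod n) : j ≠ i → PPRel (S K n i * E K n j) 0
  | preproj :
      PPRel (∑ i : ZMod n, (A K n i * S K n i - S K n i * A K n i)) 0

/-- The preprojective algebra Π_{Ã_{n-1}}. -/
abbrev Preproj := RingQuot (PPRel K n)

/-- The canonical projection from the free algebra onto Π_{Ã_{n-1}}. -/
noncomputable def pp : PPFree K n →ₐ[K] Preproj K n := RingQuot.mkAlgHom K (PPRel K n)

/-- `aPath i ℓ` is the pure nonstar path α_i α_{i+1} ⋯ α_{i+ℓ-1} (with `aPath i 0 = e_i`). -/
noncomputable def aPath (i : ZMod n) : ℕ → PPFree K n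
  | 0 => E K n i
  | (ℓ + 1) => A K n i * aPath (i + 1) ℓ

/-- `sPath j m` is the pure star path α_{j-1}* α_{j-2}* ⋯ α_{j-m}* starting at vertex j
(with `sPath j 0 = e_j`). -/
noncomputable def sPath (j : ZMod n) : ℕ → PPFree K n
  | 0 => E K n j
  | (m + 1) => S K n (j - 1) * sPath (j - 1) m

/-- The canonical-form path with source e_i consisting of ℓ nonstar arrows followed by
m star arrows, as an element of Π_{Ã_{n-1}}. -/
noncomputable def cpath (i : ZMod n) (ℓ m : ℕ) : Preproj K n :=
  pp K n (aPath K n i ℓ * sPath K n (i + (ℓ : ZMod n)) m)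

/-- The orbit sum O(ℓ,m): the sum over all paths in B_{ℓ,m} = Q_ℓQ_m* ∪ Q_mQ_ℓ*. -/
noncomputable def OO (ℓ m : ℕ) : Preproj K n :=
  if ℓ = m then ∑ i : ZMod n, cpath K n i ℓ ℓ
  else ∑ i : ZMod n, (cpath K n i ℓ m + cpath K n i m ℓ)

/-- s_1 = O(1,0) = Σ_i (α_i + α_i*). -/
noncomputable def s1 : Preproj K n := pp K n (∑ i : ZMod n, (A K n i + S K n i))

/-- s_2 = O(2,0) = Σ_i (α_i α_{i+1} + α_i* α_{i−1}*). -/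
noncomputable def s2 : Preproj K n :=
  pp K n (∑ i : ZMod n, (A K n i * A K n (i + 1) + S K n i * S K n (i - 1)))

/-- An arrow of the double quiver: `(false, i)` is the nonstar arrow α_i,
`(true, i)` is the star arrow α_i*. -/
def arrGen (n : ℕ) : Bool × ZMod n → PPGen n
  | (false, i) => PPGen.arr i
  | (true, i) => PPGen.star i

/-- The product in the free path algebra of the arrows in a word. -/
noncomputable def wordProd (w : List (Bool × ZMod n)) : PPFree K n :=
  (w.map fun a => FreeAlgebra.ι K (arrGen n a)).prod

/-- The degree-d homogeneous component of Π_{Ã_{n-1}} (as a K-submodule): spanned by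
the trivial paths for d = 0, and by the paths of length d for d ≥ 1. -/
noncomputable def homog (d : ℕ) : Submodule K (Preproj K n) :=
  if d = 0 then Submodule.span K (Set.range fun i : ZMod n => pp K n (E K n i))
  else Submodule.span K
    {x | ∃ w : List (Bool × ZMod n), w.length = d ∧ x = pp K n (wordProd K n w)}

/-- The subalgebra of D_n-invariants, i.e. elements fixed by (the automorphisms of
Π_{Ã_{n-1}} induced by) the rotation ρ and the reflection r. -/
noncomputable def fixDn (Pρ Pr : Preproj K n →ₐ[K] Preproj K n) :
    Subalgebra K (Preproj K n) :=
  AlgHom.equalizer Pρ (AlgHom.id K (Preproj K n)) ⊓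
    AlgHom.equalizer Pr (AlgHom.id K (Preproj K n))

namespace St14
open scoped BigOperators
variable (K : Type) [Field K] (n : ℕ) [NeZero n]

noncomputable def e (i : ZMod n) : Preproj K n := pp K n (E K n i)
noncomputable def a (i : ZMod n) : Preproj K n := pp K n (A K n i)
noncomputable def s (i : ZMod n) : Preproj K n := pp K n (S K n i)

variable {K n}

lemma rel {x y : PPFree K n} (h : PPRel K n x y) : pp K n x = pp K n y :=
  RingQuot.mkAlgHom_rel K h

lemma e_mul_e (i j : ZMod n) : e K n i * e K n j = if i = j then e K n i else 0 := by
  have := rel (PPRel.vtx_mul (K := K) (n := n) i j)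
  rw [map_mul] at this
  rw [e, e, this]
  split <;> simp [e]

lemma sum_e : (∑ i : ZMod n, e K n i) = 1 := by
  have := rel (PPRel.vtx_sum (K := K) (n := n))
  rw [map_sum, map_one] at this
  simpa [e] using this

lemma e_mul_a (i : ZMod n) : e K n i * a K n i = a K n i := by
  have := rel (PPRel.arr_left (K := K) (n := n) i)
  rw [map_mul] at this; exact this

lemma a_mul_e (i : ZMod n) : a K n i * e K n (i + 1) = a K n i := by
  have := rel (PPRel.arr_right (K := K) (n := n) i)
  rw [map_mul] at this; exact this

lemma e_mul_a' (i j : ZMod n) (h : j ≠ i) : e K n j * a K n i = 0 := by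
  have := rel (PPRel.arr_left' (K := K) (n := n) i j h)
  rw [map_mul, map_zero] at this; exact this

lemma a_mul_e' (i j : ZMod n) (h : j ≠ i + 1) : a K n i * e K n j = 0 := by
  have := rel (PPRel.arr_right' (K := K) (n := n) i j h)
  rw [map_mul, map_zero] at this; exact this

lemma e_mul_s (i : ZMod n) : e K n (i + 1) * s K n i = s K n i := by
  have := rel (PPRel.star_left (K := K) (n := n) i)
  rw [map_mul] at this; exact this

lemma s_mul_e (i : ZMod n) : s K n i * e K n i = s K n i := by
  have := rel (PPRel.star_right (K := K) (n := n) i)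
  rw [map_mul] at this; exact this

lemma e_mul_s' (i j : ZMod n) (h : j ≠ i + 1) : e K n j * s K n i = 0 := by
  have := rel (PPRel.star_left' (K := K) (n := n) i j h)
  rw [map_mul, map_zero] at this; exact this

lemma s_mul_e' (i j : ZMod n) (h : j ≠ i) : s K n i * e K n j = 0 := by
  have := rel (PPRel.star_right' (K := K) (n := n) i j h)
  rw [map_mul, map_zero] at this; exact this

lemma preproj_sum : (∑ i : ZMod n, (a K n i * s K n i - s K n i * a K n i)) = 0 := by
  have := rel (PPRel.preproj (K := K) (n := n))
  rw [map_zero, map_sum] at this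
  simpa [map_sub, map_mul, e, a, s] using this

/-- local preprojective relation -/
lemma as_swap (i : ZMod n) : a K n i * s K n i = s K n (i - 1) * a K n (i - 1) := by
  have h := preproj_sum (K := K) (n := n)
  have h2 : e K n i * (∑ j : ZMod n, (a K n j * s K n j - s K n j * a K n j)) * e K n i = 0 := by
    rw [h, mul_zero, zero_mul]
  rw [Finset.mul_sum, Finset.sum_mul] at h2
  have h3 : ∀ j : ZMod n, e K n i * (a K n j * s K n j - s K n j * a K n j) * e K n i
      = (if j = i then a K n i * s K n i else 0) - (if j = i - 1 then s K n j * a K n j else 0) := by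
    intro j
    rw [mul_sub, sub_mul]
    congr 1
    · by_cases hj : j = i
      · subst hj
        rw [if_pos rfl, ← mul_assoc, e_mul_a, mul_assoc, s_mul_e]
      · rw [if_neg hj, ← mul_assoc, e_mul_a' _ _ ?_, zero_mul, zero_mul]
        exact fun hh => hj hh.symm
    · by_cases hj : j = i - 1
      · subst hj
        rw [if_pos rfl, ← mul_assoc]
        have h1 : e K n i * s K n (i - 1) = s K n (i - 1) := by
          have := e_mul_s (K := K) (n := n) (i - 1)
          rwa [sub_add_cancel] at this
        have h2 : a K n (i - 1) * e K n i = a K n (i - 1) := by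
          have := a_mul_e (K := K) (n := n) (i - 1)
          rwa [sub_add_cancel] at this
        rw [h1, mul_assoc, h2]
      · rw [if_neg hj, ← mul_assoc, e_mul_s' _ _ ?_, zero_mul, zero_mul]
        intro hh
        apply hj
        have : i = j + 1 := hh
        rw [this]; ring
  have h4 : (∑ j : ZMod n, e K n i * (a K n j * s K n j - s K n j * a K n j) * e K n i)
      = a K n i * s K n i - s K n (i-1) * a K n (i-1) := by
    rw [Finset.sum_congr rfl (fun j _ => h3 j), Finset.sum_sub_distrib]
    congr 1
    · rw [Finset.sum_ite_eq' Finset.univ i (fun _ => a K n i * s K n i)]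
      simp
    · rw [Finset.sum_ite_eq' Finset.univ (i-1) (fun j => s K n j * a K n j)]
      simp
  rw [h4] at h2
  exact sub_eq_zero.mp h2

end St14
namespace St14
variable {K : Type} [Field K] {n : ℕ} [NeZero n]

noncomputable def pa (i : ZMod n) (ℓ : ℕ) : Preproj K n := pp K n (aPath K n i ℓ)
noncomputable def ps (j : ZMod n) (m : ℕ) : Preproj K n := pp K n (sPath K n j m)

lemma pa_zero (i : ZMod n) : pa (K := K) i 0 = e K n i := rfl
lemma pa_succ (i : ZMod n) (ℓ : ℕ) :
    pa (K := K) i (ℓ + 1) = a K n i * pa (i + 1) ℓ := by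
  rw [pa, aPath, map_mul]; rfl
lemma ps_zero (j : ZMod n) : ps (K := K) j 0 = e K n j := rfl
lemma ps_succ (j : ZMod n) (m : ℕ) :
    ps (K := K) j (m + 1) = s K n (j - 1) * ps (j - 1) m := by
  rw [ps, sPath, map_mul]; rfl

lemma pa_mul_e (i : ZMod n) (ℓ : ℕ) (j : ZMod n) :
    pa (K := K) i ℓ * e K n j = if j = i + (ℓ : ZMod n) then pa i ℓ else 0 := by
  induction ℓ generalizing i with
  | zero =>
    rw [pa_zero, e_mul_e]
    simp only [Nat.cast_zero, add_zero]
    by_cases h : j = i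
    · subst h; simp
    · rw [if_neg (fun hh => h hh.symm), if_neg h]
  | succ ℓ ih =>
    rw [pa_succ, mul_assoc, ih]
    have hiff : (j = (i + 1) + (ℓ : ZMod n)) ↔ (j = i + ((ℓ + 1 : ℕ) : ZMod n)) := by
      push_cast; constructor <;> intro hh <;> rw [hh] <;> ring
    by_cases h : j = (i + 1) + (ℓ : ZMod n)
    · rw [if_pos h, if_pos (hiff.mp h), ← pa_succ]
    · rw [if_neg h, mul_zero, if_neg (fun hh => h (hiff.mpr hh))]

lemma ps_mul_e (j : ZMod n) (m : ℕ) (v : ZMod n) :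
    ps (K := K) j m * e K n v = if v = j - (m : ZMod n) then ps j m else 0 := by
  induction m generalizing j with
  | zero =>
    rw [ps_zero, e_mul_e]
    simp only [Nat.cast_zero, sub_zero]
    by_cases h : v = j
    · subst h; simp
    · rw [if_neg (fun hh => h hh.symm), if_neg h]
  | succ m ih =>
    rw [ps_succ, mul_assoc, ih]
    have hiff : (v = (j - 1) - (m : ZMod n)) ↔ (v = j - ((m + 1 : ℕ) : ZMod n)) := by
      push_cast; constructor <;> intro hh <;> rw [hh] <;> ring
    by_cases h : v = (j - 1) - (m : ZMod n)
    · rw [if_pos h, if_pos (hiff.mp h), ← ps_succ]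
    · rw [if_neg h, mul_zero, if_neg (fun hh => h (hiff.mpr hh))]

lemma pa_mul_a (i : ZMod n) (ℓ : ℕ) :
    pa (K := K) i ℓ * a K n (i + (ℓ : ZMod n)) = pa i (ℓ + 1) := by
  induction ℓ generalizing i with
  | zero =>
    rw [pa_zero]
    simp only [Nat.cast_zero, add_zero]
    rw [e_mul_a, pa_succ, pa_zero, a_mul_e]
  | succ ℓ ih =>
    rw [pa_succ, mul_assoc]
    have : i + ((ℓ : ℕ) + 1 : ℕ) = (i + 1) + (ℓ : ZMod n) := by push_cast; ring
    rw [this, ih, ← pa_succ]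

lemma ps_mul_s (j : ZMod n) (m : ℕ) :
    ps (K := K) j m * s K n (j - (m : ZMod n) - 1) = ps j (m + 1) := by
  induction m generalizing j with
  | zero =>
    rw [ps_zero]
    simp only [Nat.cast_zero, sub_zero]
    have h1 : e K n j * s K n (j - 1) = s K n (j - 1) := by
      have := e_mul_s (K := K) (n := n) (j - 1)
      rwa [sub_add_cancel] at this
    rw [h1, ps_succ, ps_zero]
    have h2 : s K n (j-1) * e K n (j-1) = s K n (j-1) := s_mul_e _
    rw [h2]
  | succ m ih =>
    rw [ps_succ, mul_assoc]
    have : j - ((m : ℕ) + 1 : ℕ) - 1 = (j - 1) - (m : ZMod n) - 1 := by push_cast; ring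
    rw [this, ih, ← ps_succ]

lemma ps_mul_a (j : ZMod n) (m : ℕ) :
    ps (K := K) j m * a K n (j - (m : ZMod n)) = a K n j * ps (j + 1) m := by
  induction m generalizing j with
  | zero =>
    rw [ps_zero, ps_zero]
    simp only [Nat.cast_zero, sub_zero]
    rw [e_mul_a, a_mul_e]
  | succ m ih =>
    rw [ps_succ, mul_assoc]
    have h0 : j - ((m : ℕ) + 1 : ℕ) = (j - 1) - (m : ZMod n) := by push_cast; ring
    rw [h0, ih]
    rw [← mul_assoc]
    have hsw : s K n (j - 1) * a K n (j - 1) = a K n j * s K n j := by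
      have := as_swap (K := K) (n := n) j
      exact this.symm
    have h1 : j - 1 + 1 = j := by ring
    rw [h1, hsw, mul_assoc]
    rw [ps_succ (j + 1) m, add_sub_cancel_right]

end St14
namespace St14
variable {K : Type} [Field K] {n : ℕ} [NeZero n]

noncomputable def cp (i : ZMod n) (ℓ m : ℕ) : Preproj K n :=
  pa i ℓ * ps (i + (ℓ : ZMod n)) m

lemma cpath_eq_cp (i : ZMod n) (ℓ m : ℕ) : cpath K n i ℓ m = cp i ℓ m := by
  rw [cpath, map_mul]; rfl

lemma cp_zero_zero (i : ZMod n) : cp (K := K) i 0 0 = e K n i := by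
  rw [cp, pa_zero, ps_zero]
  simp only [Nat.cast_zero, add_zero]
  rw [e_mul_e, if_pos rfl]

lemma cp_one_zero (i : ZMod n) : cp (K := K) i 1 0 = a K n i := by
  rw [cp, ps_zero]
  have : pa (K := K) i 1 = a K n i := by
    rw [pa_succ, pa_zero, a_mul_e]
  rw [this, Nat.cast_one, a_mul_e]

lemma cp_mul_e (i : ZMod n) (ℓ m : ℕ) (j : ZMod n) :
    cp (K := K) i ℓ m * e K n j = if j = i + (ℓ : ZMod n) - (m : ZMod n) then cp i ℓ m else 0 := by
  rw [cp, mul_assoc, ps_mul_e]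
  split <;> [rfl; rw [mul_zero]]

lemma cp_mul_a (i : ZMod n) (ℓ m : ℕ) (j : ZMod n) :
    cp (K := K) i ℓ m * a K n j
      = if j = i + (ℓ : ZMod n) - (m : ZMod n) then cp i (ℓ + 1) m else 0 := by
  rw [cp, mul_assoc]
  by_cases h : j = i + (ℓ : ZMod n) - (m : ZMod n)
  · rw [if_pos h, h, ps_mul_a, ← mul_assoc, pa_mul_a, cp]
    congr 2
    push_cast; ring
  · rw [if_neg h]
    have ha : a K n j = e K n j * a K n j := (e_mul_a j).symm
    rw [ha, ← mul_assoc (ps (i + (ℓ : ZMod n)) m), ps_mul_e, if_neg h, zero_mul, mul_zero]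

lemma cp_mul_s (i : ZMod n) (ℓ m : ℕ) (j : ZMod n) :
    cp (K := K) i ℓ m * s K n j
      = if j = i + (ℓ : ZMod n) - (m : ZMod n) - 1 then cp i ℓ (m + 1) else 0 := by
  rw [cp, mul_assoc]
  by_cases h : j = i + (ℓ : ZMod n) - (m : ZMod n) - 1
  · rw [if_pos h, h, ps_mul_s, cp]
  · rw [if_neg h]
    have hs : s K n j = e K n (j + 1) * s K n j := (e_mul_s j).symm
    rw [hs, ← mul_assoc (ps (i + (ℓ : ZMod n)) m), ps_mul_e, if_neg, zero_mul, mul_zero]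
    intro hh
    exact h (by rw [← hh]; ring)

lemma s1_eq : s1 K n = ∑ i : ZMod n, (a K n i + s K n i) := by
  rw [s1, map_sum]
  exact Finset.sum_congr rfl fun i _ => by rw [map_add]; rfl

lemma s2_eq : s2 K n = ∑ i : ZMod n, (a K n i * a K n (i + 1) + s K n i * s K n (i - 1)) := by
  rw [s2, map_sum]
  exact Finset.sum_congr rfl fun i _ => by rw [map_add, map_mul, map_mul]; rfl

lemma cp_mul_s1 (i : ZMod n) (ℓ m : ℕ) :
    cp (K := K) i ℓ m * s1 K n = cp i (ℓ + 1) m + cp i ℓ (m + 1) := by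
  rw [s1_eq, Finset.mul_sum]
  have : ∀ j : ZMod n, cp (K := K) i ℓ m * (a K n j + s K n j)
      = (if j = i + (ℓ : ZMod n) - (m : ZMod n) then cp i (ℓ + 1) m else 0)
      + (if j = i + (ℓ : ZMod n) - (m : ZMod n) - 1 then cp i ℓ (m + 1) else 0) := by
    intro j
    rw [mul_add, cp_mul_a, cp_mul_s]
  rw [Finset.sum_congr rfl fun j _ => this j, Finset.sum_add_distrib,
    Finset.sum_ite_eq' Finset.univ _ (fun _ => cp i (ℓ+1) m),
    Finset.sum_ite_eq' Finset.univ _ (fun _ => cp i ℓ (m+1))]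
  simp

lemma cp_mul_s2 (i : ZMod n) (ℓ m : ℕ) :
    cp (K := K) i ℓ m * s2 K n = cp i (ℓ + 2) m + cp i ℓ (m + 2) := by
  rw [s2_eq, Finset.mul_sum]
  have key : ∀ j : ZMod n, cp (K := K) i ℓ m * (a K n j * a K n (j+1) + s K n j * s K n (j-1))
      = (if j = i + (ℓ : ZMod n) - (m : ZMod n) then cp i (ℓ + 2) m else 0)
      + (if j = i + (ℓ : ZMod n) - (m : ZMod n) - 1 then cp i ℓ (m + 2) else 0) := by
    intro j
    rw [mul_add, ← mul_assoc, ← mul_assoc, cp_mul_a, cp_mul_s]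
    congr 1
    · by_cases h : j = i + (ℓ : ZMod n) - (m : ZMod n)
      · rw [if_pos h, if_pos h, cp_mul_a, if_pos (by rw [h]; push_cast; ring)]
      · rw [if_neg h, if_neg h, zero_mul]
    · by_cases h : j = i + (ℓ : ZMod n) - (m : ZMod n) - 1
      · rw [if_pos h, if_pos h, cp_mul_s, if_pos (by rw [h]; push_cast; ring)]
      · rw [if_neg h, if_neg h, zero_mul]
  rw [Finset.sum_congr rfl fun j _ => key j, Finset.sum_add_distrib,
    Finset.sum_ite_eq' Finset.univ _ (fun _ => cp i (ℓ+2) m),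
    Finset.sum_ite_eq' Finset.univ _ (fun _ => cp i ℓ (m+2))]
  simp

noncomputable def lam : Preproj K n := ((2 : K)⁻¹) • (s1 K n * s1 K n - s2 K n)

lemma cp_mul_lam [CharZero K] (i : ZMod n) (ℓ m : ℕ) :
    cp (K := K) i ℓ m * lam (K := K) (n := n) = cp i (ℓ + 1) (m + 1) := by
  rw [lam, mul_smul_comm, mul_sub, ← mul_assoc, cp_mul_s1, add_mul, cp_mul_s1, cp_mul_s1,
    cp_mul_s2]
  have h2 : (2 : K) ≠ 0 := two_ne_zero
  have : cp (K := K) i (ℓ+1+1) m + cp i (ℓ+1) (m+1) + (cp i (ℓ+1) (m+1) + cp i ℓ (m+1+1))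
      - (cp i (ℓ+2) m + cp i ℓ (m+2)) = (2 : K) • cp i (ℓ+1) (m+1) := by
    have e1 : ℓ + 1 + 1 = ℓ + 2 := rfl
    have e2 : m + 1 + 1 = m + 2 := rfl
    rw [e1, e2, two_smul]
    abel
  rw [this, smul_smul, inv_mul_cancel₀ h2, one_smul]

lemma cp_mul_lam_pow [CharZero K] (i : ZMod n) (ℓ m t : ℕ) :
    cp (K := K) i ℓ m * (lam (K := K) (n := n)) ^ t = cp i (ℓ + t) (m + t) := by
  induction t with
  | zero => simp
  | succ t ih =>
    rw [pow_succ, ← mul_assoc, ih, cp_mul_lam]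
    rfl

lemma one_eq_sum_cp : (1 : Preproj K n) = ∑ i : ZMod n, cp (K := K) i 0 0 := by
  rw [← sum_e]
  exact Finset.sum_congr rfl fun i _ => (cp_zero_zero i).symm

end St14
namespace St14
open Matrix MvPolynomial
variable (K : Type) [Field K] (n : ℕ) [NeZero n]

noncomputable abbrev PolB := MvPolynomial Bool K
noncomputable abbrev Mat := Matrix (ZMod n) (ZMod n) (PolB K)

noncomputable def XX : PolB K := MvPolynomial.X false
noncomputable def YY : PolB K := MvPolynomial.X true

noncomputable def fm : PPGen n → Mat K n
  | PPGen.vtx i => Matrix.single i i 1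
  | PPGen.arr i => Matrix.single i (i + 1) (XX K)
  | PPGen.star i => Matrix.single (i + 1) i (YY K)

noncomputable def phi0 : PPFree K n →ₐ[K] Mat K n := FreeAlgebra.lift K (fm K n)

variable {K n}

lemma sum_std_eq_one : (∑ i : ZMod n, Matrix.single i i (1 : PolB K)) = (1 : Mat K n) := by
  apply Matrix.ext; intro i j
  rw [Matrix.sum_apply]
  by_cases h : i = j
  · subst h
    rw [Matrix.one_apply_eq]
    rw [Finset.sum_eq_single i]
    · simp [Matrix.single]
    · intro b _ hb; simp [Matrix.single, Ne.symm hb, hb]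
    · simp
  · rw [Matrix.one_apply_ne h]
    apply Finset.sum_eq_zero
    intro k _
    simp only [Matrix.single, of_apply]
    rw [if_neg]
    rintro ⟨rfl, rfl⟩
    exact h rfl

lemma phi0_rel : ∀ ⦃x y : PPFree K n⦄, PPRel K n x y → phi0 K n x = phi0 K n y := by
  intro x y h
  have hE : ∀ i, phi0 K n (E K n i) = Matrix.single i i (1 : PolB K) := fun i => by
    rw [E, phi0, FreeAlgebra.lift_ι_apply]; rfl
  have hA : ∀ i, phi0 K n (A K n i) = Matrix.single i (i+1) (XX K) := fun i => by
    rw [A, phi0, FreeAlgebra.lift_ι_apply]; rfl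
  have hS : ∀ i, phi0 K n (S K n i) = Matrix.single (i+1) i (YY K) := fun i => by
    rw [S, phi0, FreeAlgebra.lift_ι_apply]; rfl
  induction h with
  | vtx_mul i j =>
    rw [_root_.map_mul, hE, hE]
    by_cases hij : i = j
    · subst hij
      rw [if_pos rfl, hE, single_mul_single_same, one_mul]
    · rw [if_neg hij, _root_.map_zero, single_mul_single_of_ne (h := hij)]
  | vtx_sum =>
    rw [_root_.map_sum, _root_.map_one]
    rw [Finset.sum_congr rfl fun i _ => hE i]
    exact sum_std_eq_one
  | arr_left i =>
    rw [_root_.map_mul, hE, hA, single_mul_single_same, one_mul]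
  | arr_right i =>
    rw [_root_.map_mul, hE, hA, single_mul_single_same, mul_one]
  | arr_left' i j hj =>
    rw [_root_.map_mul, hE, hA, _root_.map_zero, single_mul_single_of_ne (h := hj)]
  | arr_right' i j hj =>
    rw [_root_.map_mul, hE, hA, _root_.map_zero, single_mul_single_of_ne (h := fun hh => hj hh.symm)]
  | star_left i =>
    rw [_root_.map_mul, hE, hS, single_mul_single_same, one_mul]
  | star_right i =>
    rw [_root_.map_mul, hE, hS, single_mul_single_same, mul_one]
  | star_left' i j hj =>
    rw [_root_.map_mul, hE, hS, _root_.map_zero, single_mul_single_of_ne (h := hj)]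
  | star_right' i j hj =>
    rw [_root_.map_mul, hE, hS, _root_.map_zero, single_mul_single_of_ne (h := fun hh => hj hh.symm)]
  | preproj =>
    rw [_root_.map_sum, _root_.map_zero]
    have : ∀ i : ZMod n, phi0 K n (A K n i * S K n i - S K n i * A K n i)
        = (XX K * YY K) • (Matrix.single i i (1 : PolB K) - Matrix.single (i+1) (i+1) 1) := by
      intro i
      rw [_root_.map_sub, _root_.map_mul, _root_.map_mul, hA, hS, single_mul_single_same, single_mul_single_same]
      rw [smul_sub, smul_single, smul_single]
      congr 1
      · congr 1; rw [smul_eq_mul, mul_one]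
      · congr 1; rw [smul_eq_mul, mul_one, mul_comm]
    rw [Finset.sum_congr rfl fun i _ => this i, ← Finset.smul_sum]
    rw [Finset.sum_sub_distrib]
    have hshift : (∑ i : ZMod n, Matrix.single (i+1) (i+1) (1 : PolB K))
        = ∑ i : ZMod n, Matrix.single i i (1 : PolB K) :=
      Fintype.sum_equiv (Equiv.addRight (1 : ZMod n)) _ _ (fun i => rfl)
    rw [hshift, sub_self, smul_zero]

noncomputable def phi : Preproj K n →ₐ[K] Mat K n :=
  RingQuot.liftAlgHom K ⟨phi0 K n, phi0_rel⟩

lemma phi_pp (x : PPFree K n) : phi (pp K n x) = phi0 K n x :=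
  RingQuot.liftAlgHom_mkAlgHom_apply K (phi0 K n) phi0_rel x

lemma phi_e (i : ZMod n) : phi (e K n i) = Matrix.single i i (1 : PolB K) := by
  rw [e, phi_pp, E, phi0, FreeAlgebra.lift_ι_apply]; rfl

lemma phi_a (i : ZMod n) : phi (a K n i) = Matrix.single i (i+1) (XX K) := by
  rw [a, phi_pp, A, phi0, FreeAlgebra.lift_ι_apply]; rfl

lemma phi_s (i : ZMod n) : phi (s K n i) = Matrix.single (i+1) i (YY K) := by
  rw [s, phi_pp, S, phi0, FreeAlgebra.lift_ι_apply]; rfl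

lemma phi_pa (i : ZMod n) (ℓ : ℕ) :
    phi (pa (K := K) i ℓ) = Matrix.single i (i + (ℓ : ZMod n)) ((XX K) ^ ℓ) := by
  induction ℓ generalizing i with
  | zero => rw [pa_zero, phi_e]; simp
  | succ ℓ ih =>
    rw [pa_succ, _root_.map_mul, phi_a, ih, single_mul_single_same]
    have h : i + 1 + (ℓ : ZMod n) = i + ((ℓ + 1 : ℕ) : ZMod n) := by push_cast; ring
    rw [h]
    rw [← pow_succ']

lemma phi_ps (j : ZMod n) (m : ℕ) :
    phi (ps (K := K) j m) = Matrix.single j (j - (m : ZMod n)) ((YY K) ^ m) := by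
  induction m generalizing j with
  | zero => rw [ps_zero, phi_e]; simp
  | succ m ih =>
    rw [ps_succ, _root_.map_mul, phi_s, ih]
    have h1 : j - 1 + 1 = j := by ring
    rw [h1, single_mul_single_same]
    have h2 : j - 1 - (m : ZMod n) = j - ((m + 1 : ℕ) : ZMod n) := by push_cast; ring
    rw [h2]
    rw [← pow_succ']

lemma phi_cp (i : ZMod n) (ℓ m : ℕ) :
    phi (cp (K := K) i ℓ m)
      = Matrix.single i (i + (ℓ : ZMod n) - (m : ZMod n)) ((XX K) ^ ℓ * (YY K) ^ m) := by
  rw [cp, _root_.map_mul, phi_pa, phi_ps, single_mul_single_same]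

end St14
namespace St14
open Matrix
variable {K : Type} [Field K] {n : ℕ} [NeZero n]

noncomputable def cfam (K : Type) [Field K] (n : ℕ) [NeZero n] :
    ZMod n × ℕ × ℕ → Preproj K n := fun p => cp p.1 p.2.1 p.2.2

lemma span_cfam_mul_gen {x : Preproj K n} (hx : x ∈ Submodule.span K (Set.range (cfam K n))) (g : PPGen n) :
    x * pp K n (FreeAlgebra.ι K g) ∈ Submodule.span K (Set.range (cfam K n)) := by
  induction hx using Submodule.span_induction with
  | mem y hy =>
    obtain ⟨⟨i, ℓ, m⟩, rfl⟩ := hy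
    have main : ∀ v : ZMod n, ∀ l' m' : ℕ,
        cp (K := K) i l' m' ∈ Submodule.span K (Set.range (cfam K n)) :=
      fun v l' m' => Submodule.subset_span ⟨(i, l', m'), rfl⟩
    cases g with
    | vtx v =>
      show cfam K n (i, ℓ, m) * e K n v ∈ _
      rw [cfam, cp_mul_e]
      split
      · exact Submodule.subset_span ⟨(i, ℓ, m), rfl⟩
      · exact Submodule.zero_mem _
    | arr v =>
      show cfam K n (i, ℓ, m) * a K n v ∈ _
      rw [cfam, cp_mul_a]
      split
      · exact Submodule.subset_span ⟨(i, ℓ + 1, m), rfl⟩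
      · exact Submodule.zero_mem _
    | star v =>
      show cfam K n (i, ℓ, m) * s K n v ∈ _
      rw [cfam, cp_mul_s]
      split
      · exact Submodule.subset_span ⟨(i, ℓ, m + 1), rfl⟩
      · exact Submodule.zero_mem _
  | zero => rw [zero_mul]; exact Submodule.zero_mem _
  | add y z _ _ hy hz => rw [add_mul]; exact Submodule.add_mem _ hy hz
  | smul t y _ hy => rw [smul_mul_assoc]; exact Submodule.smul_mem _ _ hy

lemma mem_span_cfam (z : Preproj K n) : z ∈ Submodule.span K (Set.range (cfam K n)) := by
  obtain ⟨y, rfl⟩ := RingQuot.mkAlgHom_surjective K (PPRel K n) z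
  have key : ∀ y : PPFree K n, ∀ x ∈ Submodule.span K (Set.range (cfam K n)),
      x * pp K n y ∈ Submodule.span K (Set.range (cfam K n)) := by
    intro y
    induction y using FreeAlgebra.induction with
    | grade0 r =>
      intro x hx
      rw [AlgHom.commutes, ← Algebra.commutes, ← Algebra.smul_def]
      exact Submodule.smul_mem _ _ hx
    | grade1 g => intro x hx; exact span_cfam_mul_gen hx g
    | mul y₁ y₂ h1 h2 =>
      intro x hx
      rw [_root_.map_mul, ← mul_assoc]
      exact h2 _ (h1 _ hx)
    | add y₁ y₂ h1 h2 =>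
      intro x hx
      rw [_root_.map_add, mul_add]
      exact Submodule.add_mem _ (h1 _ hx) (h2 _ hx)
  have h1 : (1 : Preproj K n) ∈ Submodule.span K (Set.range (cfam K n)) := by
    rw [one_eq_sum_cp (K := K) (n := n)]
    exact Submodule.sum_mem _ fun i _ => Submodule.subset_span ⟨(i, 0, 0), rfl⟩
  have := key y 1 h1
  rwa [one_mul] at this
end St14
namespace St14
open Matrix MvPolynomial
variable {K : Type} [Field K] {n : ℕ} [NeZero n]

noncomputable def mono (ℓ m : ℕ) : Bool →₀ ℕ :=
  Finsupp.single false ℓ + Finsupp.single true m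

lemma mono_inj {ℓ m ℓ' m' : ℕ} (h : mono ℓ m = mono ℓ' m') : ℓ = ℓ' ∧ m = m' := by
  constructor
  · have := congrArg (fun f : Bool →₀ ℕ => f false) h
    simpa [mono, Finsupp.single_apply] using this
  · have := congrArg (fun f : Bool →₀ ℕ => f true) h
    simpa [mono, Finsupp.single_apply] using this

lemma XYpow (ℓ m : ℕ) :
    (XX K) ^ ℓ * (YY K) ^ m = MvPolynomial.monomial (mono ℓ m) (1 : K) := by
  rw [XX, YY, X_pow_eq_monomial, X_pow_eq_monomial, monomial_mul, one_mul, mono]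

lemma phi_inj {z : Preproj K n} (hz : phi z = 0) : z = 0 := by
  obtain ⟨c, hc⟩ := Finsupp.mem_span_range_iff_exists_finsupp.mp (mem_span_cfam z)
  have hphi : (c.sum fun p t => t • phi (cfam K n p)) = 0 := by
    rw [← hz, ← hc, map_finsuppSum]
    exact Finsupp.sum_congr fun p _ => by rw [_root_.map_smul]
  have hc0 : c = 0 := by
    ext p
    obtain ⟨i, ℓ, m⟩ := p
    classical
    let L : Mat K n →ₗ[K] K :=
      (MvPolynomial.lcoeff K (mono ℓ m)) ∘ₗ
        ((LinearMap.proj (i + (ℓ : ZMod n) - (m : ZMod n))) ∘ₗ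
          (LinearMap.proj (R := K) (φ := fun _ : ZMod n => ZMod n → PolB K) i))
    have hL : ∀ q : ZMod n × ℕ × ℕ, ∀ t : K,
        L (t • phi (cfam K n q)) = if q = (i, ℓ, m) then t else 0 := by
      rintro ⟨i', ℓ', m'⟩ t
      rw [_root_.map_smul, show cfam K n (i', ℓ', m') = cp i' ℓ' m' from rfl, phi_cp,
        smul_eq_mul]
      show t * (MvPolynomial.lcoeff K (mono ℓ m))
          ((Matrix.single i' (i' + (ℓ' : ZMod n) - (m' : ZMod n)) ((XX K) ^ ℓ' * (YY K) ^ m'))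
            i (i + (ℓ : ZMod n) - (m : ZMod n))) = _
      by_cases h1 : i' = i ∧ i' + (ℓ' : ZMod n) - (m' : ZMod n) = i + (ℓ : ZMod n) - (m : ZMod n)
      · have hent : (Matrix.single i' (i' + (ℓ' : ZMod n) - (m' : ZMod n))
            ((XX K) ^ ℓ' * (YY K) ^ m')) i (i + (ℓ : ZMod n) - (m : ZMod n))
            = (XX K) ^ ℓ' * (YY K) ^ m' := by
          simp only [Matrix.single, of_apply]
          rw [if_pos h1]
        rw [hent, XYpow, lcoeff_apply, coeff_monomial]
        by_cases h2 : mono ℓ' m' = mono ℓ m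
        · obtain ⟨rfl, rfl⟩ := mono_inj h2
          rw [if_pos rfl, mul_one, if_pos (by rw [h1.1])]
        · rw [if_neg h2, mul_zero, if_neg]
          intro h3; cases h3; exact h2 rfl
      · have hent : (Matrix.single i' (i' + (ℓ' : ZMod n) - (m' : ZMod n))
            ((XX K) ^ ℓ' * (YY K) ^ m')) i (i + (ℓ : ZMod n) - (m : ZMod n)) = 0 := by
          simp only [Matrix.single, of_apply]
          rw [if_neg h1]
        rw [hent, _root_.map_zero, mul_zero, if_neg]
        intro h3; cases h3; exact h1 ⟨rfl, rfl⟩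
    have hthis := congrArg L hphi
    rw [map_finsuppSum, _root_.map_zero] at hthis
    have hsum : (c.sum fun q t => L (t • phi (cfam K n q)))
        = c.sum fun q t => if q = (i, ℓ, m) then t else 0 :=
      Finsupp.sum_congr fun q _ => hL q (c q)
    rw [hsum, Finsupp.sum_ite_eq' c (i, ℓ, m) (fun _ t => t)] at hthis
    by_cases hmem : (i, ℓ, m) ∈ c.support
    · rw [if_pos hmem] at hthis; simpa using hthis
    · simpa using Finsupp.notMem_support_iff.mp hmem
  rw [← hc, hc0]
  simp
end St14
namespace St14
variable {K : Type} [Field K] {n : ℕ} [NeZero n]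

section Inv
variable (Pρ Pr : Preproj K n →ₐ[K] Preproj K n)
variable (hρA : ∀ i, Pρ (a K n i) = a K n (i + 1))
variable (hρS : ∀ i, Pρ (s K n i) = s K n (i + 1))
variable (hrA : ∀ i, Pr (a K n i) = s K n (-i - 1))
variable (hrS : ∀ i, Pr (s K n i) = a K n (-i - 1))

lemma mem_fix_iff (x : Preproj K n) :
    x ∈ fixDn K n Pρ Pr ↔ Pρ x = x ∧ Pr x = x := Iff.rfl

noncomputable def negE : Equiv.Perm (ZMod n) :=
  Function.Involutive.toPerm (fun i => -i - 1) (fun i => by ring)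

include hρA hρS hrA hrS

lemma s1_fix : s1 K n ∈ fixDn K n Pρ Pr := by
  rw [mem_fix_iff]
  constructor
  · rw [s1_eq, map_sum]
    simp only [map_add, hρA, hρS]
    exact Fintype.sum_equiv (Equiv.addRight (1 : ZMod n)) _ _ (fun i => rfl)
  · rw [s1_eq, map_sum]
    simp only [map_add, hrA, hrS]
    refine Fintype.sum_equiv (negE (n := n)) _ _ (fun i => ?_)
    show s K n (-i-1) + a K n (-i-1) = a K n (-i-1) + s K n (-i-1)
    exact add_comm _ _

lemma s2_fix : s2 K n ∈ fixDn K n Pρ Pr := by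
  rw [mem_fix_iff]
  constructor
  · rw [s2_eq, map_sum]
    simp only [map_add, map_mul, hρA, hρS]
    refine Fintype.sum_equiv (Equiv.addRight (1 : ZMod n)) _ _ (fun i => ?_)
    show a K n (i+1) * a K n (i+1+1) + s K n (i+1) * s K n (i-1+1)
        = a K n (i+1) * a K n (i+1+1) + s K n (i+1) * s K n (i+1-1)
    have h1 : i - 1 + 1 = i + 1 - 1 := by ring
    rw [h1]
  · rw [s2_eq, map_sum]
    simp only [map_add, map_mul, hrA, hrS]
    refine Fintype.sum_equiv (negE (n := n)) _ _ (fun i => ?_)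
    show s K n (-i-1) * s K n (-(i+1)-1) + a K n (-i-1) * a K n (-(i-1)-1)
        = a K n (-i-1) * a K n (-i-1+1) + s K n (-i-1) * s K n (-i-1-1)
    have h1 : -(i+1)-1 = -i-1-1 := by ring
    have h2 : -(i-1)-1 = -i-1+1 := by ring
    rw [h1, h2, add_comm]

lemma lam_fix : lam (K := K) (n := n) ∈ fixDn K n Pρ Pr := by
  apply Subalgebra.smul_mem
  exact sub_mem (mul_mem (s1_fix Pρ Pr hρA hρS hrA hrS) (s1_fix Pρ Pr hρA hρS hrA hrS))
    (s2_fix Pρ Pr hρA hρS hrA hrS)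

lemma exist_pq [CharZero K] :
    ∀ ℓ m : ℕ, ∃ p q : Preproj K n, p ∈ fixDn K n Pρ Pr ∧ q ∈ fixDn K n Pρ Pr ∧
      ∀ i : ZMod n, cp i ℓ m = e K n i * p + a K n i * q := by
  have hs1 := s1_fix Pρ Pr hρA hρS hrA hrS
  have hlam := lam_fix Pρ Pr hρA hρS hrA hrS
  -- pure nonstar paths
  have HA : ∀ ℓ : ℕ, ∃ p q : Preproj K n, p ∈ fixDn K n Pρ Pr ∧ q ∈ fixDn K n Pρ Pr ∧
      ∀ i : ZMod n, cp i ℓ 0 = e K n i * p + a K n i * q := by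
    have key : ∀ ℓ : ℕ,
        (∃ p q : Preproj K n, p ∈ fixDn K n Pρ Pr ∧ q ∈ fixDn K n Pρ Pr ∧
          ∀ i : ZMod n, cp i ℓ 0 = e K n i * p + a K n i * q) ∧
        (∃ p q : Preproj K n, p ∈ fixDn K n Pρ Pr ∧ q ∈ fixDn K n Pρ Pr ∧
          ∀ i : ZMod n, cp i (ℓ+1) 0 = e K n i * p + a K n i * q) := by
      intro ℓ
      induction ℓ with
      | zero =>
        constructor
        · exact ⟨1, 0, one_mem _, zero_mem _, fun i => by
            rw [cp_zero_zero, mul_one, mul_zero, add_zero]⟩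
        · exact ⟨0, 1, zero_mem _, one_mem _, fun i => by
            rw [cp_one_zero, mul_one, mul_zero, zero_add]⟩
      | succ ℓ ih =>
        refine ⟨ih.2, ?_⟩
        obtain ⟨p0, q0, hp0, hq0, h0⟩ := ih.1
        obtain ⟨p1, q1, hp1, hq1, h1⟩ := ih.2
        refine ⟨p1 * s1 K n - p0 * lam, q1 * s1 K n - q0 * lam,
          sub_mem (mul_mem hp1 hs1) (mul_mem hp0 hlam),
          sub_mem (mul_mem hq1 hs1) (mul_mem hq0 hlam), fun i => ?_⟩
        have e1 : cp (K := K) i (ℓ+1) 0 * s1 K n = cp i (ℓ+2) 0 + cp i (ℓ+1) 1 :=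
          cp_mul_s1 i (ℓ+1) 0
        have e2 : cp (K := K) i ℓ 0 * lam = cp i (ℓ+1) 1 := cp_mul_lam i ℓ 0
        have : cp (K := K) i (ℓ+2) 0 = cp i (ℓ+1) 0 * s1 K n - cp i ℓ 0 * lam := by
          rw [e1, e2]; abel
        rw [this, h1, h0]
        rw [mul_sub, mul_sub, add_mul, add_mul, mul_assoc, mul_assoc, mul_assoc, mul_assoc]
        abel
    exact fun ℓ => (key ℓ).1
  -- pure star paths
  have HS : ∀ m : ℕ, ∃ p q : Preproj K n, p ∈ fixDn K n Pρ Pr ∧ q ∈ fixDn K n Pρ Pr ∧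
      ∀ i : ZMod n, cp i 0 m = e K n i * p + a K n i * q := by
    have key : ∀ m : ℕ,
        (∃ p q : Preproj K n, p ∈ fixDn K n Pρ Pr ∧ q ∈ fixDn K n Pρ Pr ∧
          ∀ i : ZMod n, cp i 0 m = e K n i * p + a K n i * q) ∧
        (∃ p q : Preproj K n, p ∈ fixDn K n Pρ Pr ∧ q ∈ fixDn K n Pρ Pr ∧
          ∀ i : ZMod n, cp i 0 (m+1) = e K n i * p + a K n i * q) := by
      intro m
      induction m with
      | zero =>
        constructor
        · exact ⟨1, 0, one_mem _, zero_mem _, fun i => by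
            rw [cp_zero_zero, mul_one, mul_zero, add_zero]⟩
        · refine ⟨s1 K n, -1, hs1, neg_mem (one_mem _), fun i => ?_⟩
          have e1 : cp (K := K) i 0 0 * s1 K n = cp i 1 0 + cp i 0 1 := cp_mul_s1 i 0 0
          rw [cp_zero_zero] at e1
          have : cp (K := K) i 0 1 = e K n i * s1 K n - cp i 1 0 := by rw [e1]; abel
          rw [this, cp_one_zero, sub_eq_add_neg]
          congr 1
          exact (mul_neg_one (a K n i)).symm
      | succ m ih =>
        refine ⟨ih.2, ?_⟩
        obtain ⟨p0, q0, hp0, hq0, h0⟩ := ih.1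
        obtain ⟨p1, q1, hp1, hq1, h1⟩ := ih.2
        refine ⟨p1 * s1 K n - p0 * lam, q1 * s1 K n - q0 * lam,
          sub_mem (mul_mem hp1 hs1) (mul_mem hp0 hlam),
          sub_mem (mul_mem hq1 hs1) (mul_mem hq0 hlam), fun i => ?_⟩
        have e1 : cp (K := K) i 0 (m+1) * s1 K n = cp i 1 (m+1) + cp i 0 (m+2) :=
          cp_mul_s1 i 0 (m+1)
        have e2 : cp (K := K) i 0 m * lam = cp i 1 (m+1) := cp_mul_lam i 0 m
        have : cp (K := K) i 0 (m+2) = cp i 0 (m+1) * s1 K n - cp i 0 m * lam := by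
          rw [e1, e2]; abel
        rw [this, h1, h0]
        rw [mul_sub, mul_sub, add_mul, add_mul, mul_assoc, mul_assoc, mul_assoc, mul_assoc]
        abel
    exact fun m => (key m).1
  intro ℓ m
  by_cases h : m ≤ ℓ
  · obtain ⟨p, q, hp, hq, hh⟩ := HA (ℓ - m)
    refine ⟨p * lam ^ m, q * lam ^ m, mul_mem hp (pow_mem hlam m),
      mul_mem hq (pow_mem hlam m), fun i => ?_⟩
    have : cp (K := K) i (ℓ - m) 0 * lam ^ m = cp i ℓ m := by
      rw [cp_mul_lam_pow]
      congr 1 <;> omega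
    rw [← this, hh i]
    rw [add_mul, mul_assoc, mul_assoc]
  · obtain ⟨p, q, hp, hq, hh⟩ := HS (m - ℓ)
    refine ⟨p * lam ^ ℓ, q * lam ^ ℓ, mul_mem hp (pow_mem hlam ℓ),
      mul_mem hq (pow_mem hlam ℓ), fun i => ?_⟩
    have : cp (K := K) i 0 (m - ℓ) * lam ^ ℓ = cp i ℓ m := by
      rw [cp_mul_lam_pow]
      congr 1 <;> omega
    rw [← this, hh i]
    rw [add_mul, mul_assoc, mul_assoc]

end Inv
end St14
namespace St14
open Matrix Polynomial
variable {K : Type} [Field K] {n : ℕ} [NeZero n]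

section Shift
variable {Pρ : Preproj K n →ₐ[K] Preproj K n}
variable (hρE : ∀ i, Pρ (e K n i) = e K n (i + 1))
include hρE

lemma shift_ea (hρA : ∀ i, Pρ (a K n i) = a K n (i + 1)) {γ δ : Preproj K n}
    (hγ : Pρ γ = γ) (hδ : Pρ δ = δ) (v : ZMod n)
    (h : e K n v * γ + a K n v * δ = 0) :
    ∀ w : ZMod n, e K n w * γ + a K n w * δ = 0 := by
  have step : ∀ w : ZMod n, e K n w * γ + a K n w * δ = 0 →
      e K n (w+1) * γ + a K n (w+1) * δ = 0 := by
    intro w hw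
    have := congrArg Pρ hw
    rwa [map_add, _root_.map_mul, _root_.map_mul, hρE, hρA, hγ, hδ, map_zero] at this
  intro w
  have key : ∀ t : ℕ, e K n (v + (t : ZMod n)) * γ + a K n (v + (t : ZMod n)) * δ = 0 := by
    intro t
    induction t with
    | zero => simpa using h
    | succ t ih =>
      have h2 := step _ ih
      have h3 : v + ((t : ℕ) + 1 : ℕ) = v + (t : ZMod n) + 1 := by push_cast; ring
      rw [h3]
      exact h2
  have h4 := key (w - v).val
  rw [ZMod.natCast_val, ZMod.cast_id] at h4
  have h5 : v + (w - v) = w := by ring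
  rwa [h5] at h4

lemma shift_es (hρS : ∀ i, Pρ (s K n i) = s K n (i + 1)) {γ δ : Preproj K n}
    (hγ : Pρ γ = γ) (hδ : Pρ δ = δ) (v : ZMod n)
    (h : e K n v * γ + s K n (v - 1) * δ = 0) :
    ∀ w : ZMod n, e K n w * γ + s K n (w - 1) * δ = 0 := by
  have step : ∀ w : ZMod n, e K n w * γ + s K n (w - 1) * δ = 0 →
      e K n (w+1) * γ + s K n (w + 1 - 1) * δ = 0 := by
    intro w hw
    have := congrArg Pρ hw
    rw [map_add, _root_.map_mul, _root_.map_mul, hρE, hρS, hγ, hδ, map_zero] at this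
    have h3 : w - 1 + 1 = w + 1 - 1 := by ring
    rwa [h3] at this
  intro w
  have key : ∀ t : ℕ, e K n (v + (t : ZMod n)) * γ + s K n (v + (t : ZMod n) - 1) * δ = 0 := by
    intro t
    induction t with
    | zero => simpa using h
    | succ t ih =>
      have h2 := step _ ih
      have h3 : v + ((t : ℕ) + 1 : ℕ) = v + (t : ZMod n) + 1 := by push_cast; ring
      rw [h3]
      exact h2
  have h4 := key (w - v).val
  rw [ZMod.natCast_val, ZMod.cast_id] at h4
  have h5 : v + (w - v) = w := by ring
  rwa [h5] at h4

end Shift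

noncomputable def evB : PolB K →+* Polynomial K :=
  (MvPolynomial.aeval (R := K) (fun b : Bool => if b then 0 else Polynomial.X)).toRingHom

lemma evB_XX : evB (XX K) = Polynomial.X := by
  rw [XX, evB]; simp
lemma evB_YY : evB (YY K) = 0 := by
  rw [YY, evB]; simp

lemma AS_cancel {δ : Preproj K n}
    (h : ((∑ w : ZMod n, a K n w) - ∑ w : ZMod n, s K n w) * δ = 0) : δ = 0 := by
  classical
  set M : Mat K n := (∑ w : ZMod n, Matrix.single w (w+1) (XX K))
      - ∑ w : ZMod n, Matrix.single (w+1) w (YY K) with hM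
  have hphiM : phi ((∑ w : ZMod n, a K n w) - ∑ w : ZMod n, s K n w) = M := by
    rw [_root_.map_sub, _root_.map_sum, _root_.map_sum, hM]
    congr 1
    · exact Finset.sum_congr rfl fun w _ => phi_a w
    · exact Finset.sum_congr rfl fun w _ => phi_s w
  have hMmul : M * phi δ = 0 := by
    have := congrArg phi h
    rwa [_root_.map_mul, _root_.map_zero, hphiM] at this
  -- the determinant of M is nonzero
  have hdet : M.det ≠ 0 := by
    intro h0
    have hmap : ((evB (K := K)).mapMatrix M).det = 0 := by
      rw [← RingHom.map_det, h0, map_zero]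
    have hPmat : ∀ i j : ZMod n,
        (Equiv.Perm.permMatrix (Polynomial K) (Equiv.addRight (1 : ZMod n))) i j
          = if j = i + 1 then 1 else 0 := by
      intro i j
      simp only [Equiv.Perm.permMatrix, PEquiv.toMatrix_apply, Equiv.toPEquiv,
        PEquiv.coe_mk, Option.mem_def, Function.comp_apply, Option.some.injEq,
        Equiv.coe_addRight]
      by_cases hj : j = i + 1
      · rw [if_pos hj.symm, if_pos hj]
      · rw [if_neg (fun hh => hj hh.symm), if_neg hj]
    have hMev : (evB (K := K)).mapMatrix M
        = (Polynomial.X : Polynomial K) •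
            (Equiv.Perm.permMatrix (Polynomial K) (Equiv.addRight (1 : ZMod n))) := by
      apply Matrix.ext; intro i j
      rw [RingHom.mapMatrix_apply, Matrix.map_apply, hM]
      rw [Matrix.sub_apply, Matrix.sum_apply, Matrix.sum_apply]
      have hfst : (∑ w : ZMod n, Matrix.single w (w+1) (XX K) i j)
          = if j = i + 1 then XX K else 0 := by
        rw [Finset.sum_eq_single i]
        · by_cases hj : j = i + 1
          · rw [if_pos hj, hj, Matrix.single_apply_same]
          · rw [if_neg hj]
            apply Matrix.single_apply_of_ne
            rintro ⟨h1, h2⟩; exact hj h2.symm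
        · intro b _ hb
          apply Matrix.single_apply_of_ne
          rintro ⟨h1, h2⟩; exact hb h1
        · simp
      have hsnd : (∑ w : ZMod n, Matrix.single (w+1) w (YY K) i j)
          = if i = j + 1 then YY K else 0 := by
        rw [Finset.sum_eq_single j]
        · by_cases hj : i = j + 1
          · rw [if_pos hj, hj, Matrix.single_apply_same]
          · rw [if_neg hj]
            apply Matrix.single_apply_of_ne
            rintro ⟨h1, h2⟩; exact hj h1.symm
        · intro b _ hb
          apply Matrix.single_apply_of_ne
          rintro ⟨h1, h2⟩; exact hb h2
        · simp
      rw [hfst, hsnd, map_sub, Matrix.smul_apply, hPmat i j]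
      split_ifs <;> simp [evB_XX, evB_YY]
    rw [hMev, Matrix.det_smul, Matrix.det_permutation] at hmap
    rcases mul_eq_zero.mp hmap with h1 | h1
    · exact pow_ne_zero _ Polynomial.X_ne_zero h1
    · rcases Int.units_eq_one_or (Equiv.Perm.sign (Equiv.addRight (1 : ZMod n))) with h2 | h2 <;>
        rw [h2] at h1 <;> simp at h1
  -- conclude phi δ = 0
  have hphid : phi δ = 0 := by
    have h1 := congrArg (fun Z => M.adjugate * Z) hMmul
    simp only [← mul_assoc, Matrix.adjugate_mul, mul_zero] at h1
    rw [Matrix.smul_mul, Matrix.one_mul] at h1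
    apply Matrix.ext; intro i j
    have h2 := congrArg (fun Z : Mat K n => Z i j) h1
    simp only [Matrix.smul_apply, Matrix.zero_apply, smul_eq_mul] at h2
    rcases mul_eq_zero.mp h2 with h3 | h3
    · exact absurd h3 hdet
    · simpa using h3
  exact phi_inj hphid
end St14

open St14 in
/-- R = Π_{Ã_{n-1}} is a free right module over the invariant ring
R^{D_n} of rank 2n, with basis {e_0, …, e_{n−1}, α_0, …, α_{n−1}}: every element of R
is a unique right R^{D_n}-linear combination of these 2n elements. -/
theorem statement14 [IsAlgClosed K] [CharZero K] (h3 : 3 ≤ n)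
    (Pρ Pr : Preproj K n →ₐ[K] Preproj K n)
    (hρE : ∀ i, Pρ (pp K n (E K n i)) = pp K n (E K n (i + 1)))
    (hρA : ∀ i, Pρ (pp K n (A K n i)) = pp K n (A K n (i + 1)))
    (hρS : ∀ i, Pρ (pp K n (S K n i)) = pp K n (S K n (i + 1)))
    (hrE : ∀ i, Pr (pp K n (E K n i)) = pp K n (E K n (-i)))
    (hrA : ∀ i, Pr (pp K n (A K n i)) = pp K n (S K n (-i - 1)))
    (hrS : ∀ i, Pr (pp K n (S K n i)) = pp K n (A K n (-i - 1))) :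
    (∀ x : Preproj K n, ∃ c : Fin n ⊕ Fin n → ↥(fixDn K n Pρ Pr),
      x = ∑ j : Fin n ⊕ Fin n,
        (Sum.elim (fun i : Fin n => pp K n (E K n (i : ℕ)))
          (fun i : Fin n => pp K n (A K n (i : ℕ))) j) * ((c j : Preproj K n))) ∧
    (∀ c : Fin n ⊕ Fin n → ↥(fixDn K n Pρ Pr),
      (∑ j : Fin n ⊕ Fin n,
        (Sum.elim (fun i : Fin n => pp K n (E K n (i : ℕ)))
          (fun i : Fin n => pp K n (A K n (i : ℕ))) j) * ((c j : Preproj K n))) = 0 →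
      c = 0) := by
  classical
  -- translate hypotheses to the e/a/s notations
  have hρE' : ∀ i, Pρ (e K n i) = e K n (i + 1) := hρE
  have hρA' : ∀ i, Pρ (a K n i) = a K n (i + 1) := hρA
  have hρS' : ∀ i, Pρ (s K n i) = s K n (i + 1) := hρS
  have hrE' : ∀ i, Pr (e K n i) = e K n (-i) := hrE
  have hrA' : ∀ i, Pr (a K n i) = s K n (-i - 1) := hrA
  have hrS' : ∀ i, Pr (s K n i) = a K n (-i - 1) := hrS
  have bj_inl : ∀ k : Fin n, (Sum.elim (fun i : Fin n => pp K n (E K n (i : ℕ)))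
      (fun i : Fin n => pp K n (A K n (i : ℕ))) (Sum.inl k)) = e K n ((k : ℕ) : ZMod n) := fun k => rfl
  have bj_inr : ∀ k : Fin n, (Sum.elim (fun i : Fin n => pp K n (E K n (i : ℕ)))
      (fun i : Fin n => pp K n (A K n (i : ℕ))) (Sum.inr k)) = a K n ((k : ℕ) : ZMod n) := fun k => rfl
  have cast_fin : ∀ i : ZMod n, ((⟨i.val, ZMod.val_lt i⟩ : Fin n) : ℕ) = i.val := fun i => rfl
  have cast_inj : ∀ k k' : Fin n, (((k : ℕ) : ZMod n) = ((k' : ℕ) : ZMod n)) → k = k' := by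
    intro k k' h
    have h1 := congrArg ZMod.val h
    rw [ZMod.val_cast_of_lt k.isLt, ZMod.val_cast_of_lt k'.isLt] at h1
    exact Fin.ext h1
  constructor
  · -- existence
    intro x
    have hx := mem_span_cfam (K := K) (n := n) x
    induction hx using Submodule.span_induction with
    | mem y hy =>
      obtain ⟨⟨i, ℓ, m⟩, rfl⟩ := hy
      obtain ⟨p, q, hp, hq, hcp⟩ := exist_pq Pρ Pr hρA' hρS' hrA' hrS' ℓ m
      set iF : Fin n := ⟨i.val, ZMod.val_lt i⟩ with hiF
      have hival : ((iF : ℕ) : ZMod n) = i := by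
        rw [cast_fin]
        rw [ZMod.natCast_val, ZMod.cast_id]
      refine ⟨fun j => if j = Sum.inl iF then ⟨p, hp⟩ else if j = Sum.inr iF then ⟨q, hq⟩ else 0, ?_⟩
      have hterm : ∀ j : Fin n ⊕ Fin n,
          (Sum.elim (fun i : Fin n => pp K n (E K n (i : ℕ)))
            (fun i : Fin n => pp K n (A K n (i : ℕ))) j) *
          (((if j = Sum.inl iF then (⟨p, hp⟩ : fixDn K n Pρ Pr)
            else if j = Sum.inr iF then ⟨q, hq⟩ else 0) : fixDn K n Pρ Pr) : Preproj K n)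
          = (if j = Sum.inl iF then e K n i * p else 0)
            + (if j = Sum.inr iF then a K n i * q else 0) := by
        intro j
        by_cases h1 : j = Sum.inl iF
        · subst h1
          rw [if_pos rfl, if_pos rfl, if_neg (by simp), add_zero, bj_inl, hival]
        · by_cases h2 : j = Sum.inr iF
          · subst h2
            rw [if_neg h1, if_pos rfl, if_neg h1, if_pos rfl, zero_add, bj_inr, hival]
          · rw [if_neg h1, if_neg h2, if_neg h1, if_neg h2, add_zero]
            simp
      rw [Finset.sum_congr rfl fun j _ => hterm j, Finset.sum_add_distrib,
        Finset.sum_ite_eq' Finset.univ (Sum.inl iF) (fun _ => e K n i * p),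
        Finset.sum_ite_eq' Finset.univ (Sum.inr iF) (fun _ => a K n i * q)]
      simp only [Finset.mem_univ, if_pos]
      show cfam K n (i, ℓ, m) = _
      rw [cfam]
      exact hcp i
    | zero =>
      exact ⟨0, by simp⟩
    | add y z _ _ hy hz =>
      obtain ⟨cy, hcy⟩ := hy
      obtain ⟨cz, hcz⟩ := hz
      refine ⟨cy + cz, ?_⟩
      rw [hcy, hcz, ← Finset.sum_add_distrib]
      exact Finset.sum_congr rfl fun j _ => by
        rw [Pi.add_apply]
        push_cast
        rw [mul_add]
    | smul t y _ hy =>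
      obtain ⟨cy, hcy⟩ := hy
      refine ⟨t • cy, ?_⟩
      rw [hcy, Finset.smul_sum]
      exact Finset.sum_congr rfl fun j _ => by
        rw [Pi.smul_apply]
        push_cast
        rw [mul_smul_comm]
  · -- uniqueness
    intro c hc
    rw [Fintype.sum_sum_type] at hc
    simp only [bj_inl, bj_inr] at hc
    have main : ∀ k : Fin n, (c (Sum.inl k) : Preproj K n) = 0 ∧ (c (Sum.inr k) : Preproj K n) = 0 := by
      intro k
      set v : ZMod n := ((k : ℕ) : ZMod n) with hv
      set γ : Preproj K n := (c (Sum.inl k) : Preproj K n) with hγdef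
      set δ : Preproj K n := (c (Sum.inr k) : Preproj K n) with hδdef
      have hγfix := (c (Sum.inl k)).2
      have hδfix := (c (Sum.inr k)).2
      rw [mem_fix_iff] at hγfix hδfix
      -- multiply hc on the left by e v
      have h0 := congrArg (fun z => e K n v * z) hc
      simp only [mul_zero, mul_add, Finset.mul_sum] at h0
      have hs1 : (∑ k' : Fin n, e K n v * (e K n ((k' : ℕ) : ZMod n) * (c (Sum.inl k') : Preproj K n)))
          = e K n v * γ := by
        rw [Finset.sum_eq_single k]
        · rw [← mul_assoc, e_mul_e, if_pos rfl]
        · intro k' _ hk'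
          rw [← mul_assoc, e_mul_e, if_neg (fun hh => hk' (cast_inj k k' hh).symm), zero_mul]
        · simp
      have hs2 : (∑ k' : Fin n, e K n v * (a K n ((k' : ℕ) : ZMod n) * (c (Sum.inr k') : Preproj K n)))
          = a K n v * δ := by
        rw [Finset.sum_eq_single k]
        · rw [← mul_assoc, e_mul_a]
        · intro k' _ hk'
          rw [← mul_assoc, e_mul_a' _ _ (fun hh => hk' (cast_inj k k' hh).symm), zero_mul]
        · simp
      rw [hs1, hs2] at h0
      have Eq1 : e K n v * γ + a K n v * δ = 0 := h0
      have EqAll := shift_ea hρE' hρA' hγfix.1 hδfix.1 v Eq1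
      have EqAll' : ∀ w : ZMod n, e K n w * γ + a K n w * δ = 0 := EqAll
      -- apply Pr
      have EqR : ∀ w : ZMod n, e K n w * γ + s K n (w - 1) * δ = 0 := by
        intro w
        have := congrArg Pr (EqAll (-w))
        rw [map_add, _root_.map_mul, _root_.map_mul, hrE', hrA', hγfix.2, hδfix.2, map_zero] at this
        rw [neg_neg] at this
        exact this
      -- subtract
      have EqD : ∀ w : ZMod n, (a K n w - s K n (w - 1)) * δ = 0 := by
        intro w
        have := sub_eq_zero.mpr ((EqAll' w).trans (EqR w).symm)
        rw [sub_mul]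
        have h4 : e K n w * γ + a K n w * δ - (e K n w * γ + s K n (w - 1) * δ)
            = a K n w * δ - s K n (w - 1) * δ := by abel
        rw [h4] at this
        exact this
      have hsum : ((∑ w : ZMod n, a K n w) - ∑ w : ZMod n, s K n w) * δ = 0 := by
        have h5 : (∑ w : ZMod n, (a K n w - s K n (w - 1))) * δ = 0 := by
          rw [Finset.sum_mul]
          rw [Finset.sum_congr rfl fun w _ => EqD w]
          simp
        have h6 : (∑ w : ZMod n, (a K n w - s K n (w - 1)))
            = (∑ w : ZMod n, a K n w) - ∑ w : ZMod n, s K n w := by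
          rw [Finset.sum_sub_distrib]
          congr 1
          exact Fintype.sum_equiv (Equiv.subRight (1 : ZMod n)) _ _ (fun w => rfl)
        rwa [h6] at h5
      have hδ0 : δ = 0 := AS_cancel hsum
      have hγ0 : γ = 0 := by
        have h7 : ∀ w : ZMod n, e K n w * γ = 0 := by
          intro w
          have := EqAll' w
          rwa [hδ0, mul_zero, add_zero] at this
        have h8 : (∑ w : ZMod n, e K n w) * γ = 0 := by
          rw [Finset.sum_mul, Finset.sum_congr rfl fun w _ => h7 w]
          simp
        rwa [sum_e, one_mul] at h8
      exact ⟨hγ0, hδ0⟩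
    funext j
    cases j with
    | inl k => exact Subtype.ext (main k).1
    | inr k => exact Subtype.ext (main k).2
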